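/- Let $\varphi_0:[0,S]\to[0,h]$ be increasing, surjective and 1-Lipschitz. Then there exists a sequence of strictly increasing, absolutely continuous, surjective functions $\sigma_i:[0,h]\to[0,S]$ whose inverses $\varphi_{0_i}$ are strictly increasing and 1-Lipschitz, such that $\varphi_{0_i}\to\varphi_0$ uniformly on $[0,S]$ and $\sigma_i(r)\to\sigma(r)$ at every continuity point $r$ of the right inverse $\sigma$ of $\varphi_0$. -/

import Mathlib

open MeasureTheory
open scoped ENNReal NNReal

/-- The approximating function `φ0ᵢ`, extended to all of `ℝ`. -/
noncomputable def stmt14Psi (h S : ℝ) (φ0 : ℝ → ℝ) (e : ℝ) (s : ℝ) : ℝ :=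
  (1 - e) * φ0 (max 0 (min s S)) + e * (h / S) * max 0 (min s S) + min s 0 + max (s - S) 0

/-- The inverse `σᵢ`. -/
noncomputable def stmt14Sigma (h S : ℝ) (φ0 : ℝ → ℝ) (e : ℝ) : ℝ → ℝ :=
  Function.invFun (stmt14Psi h S φ0 e)

/-- The Stieltjes-type measure associated to `σᵢ`, restricted to a compact interval. -/
noncomputable def stmt14Mu (h S : ℝ) (φ0 : ℝ → ℝ) (e : ℝ) : Measure ℝ :=
  (Measure.map (stmt14Psi h S φ0 e) volume).restrict (Set.Icc (-1) (h + 1))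

/-- The density `gᵢ`. -/
noncomputable def stmt14g (h S : ℝ) (φ0 : ℝ → ℝ) (e : ℝ) (t : ℝ) : ℝ :=
  ((stmt14Mu h S φ0 e).rnDeriv volume t).toReal

set_option maxHeartbeats 2000000 in
/-- every increasing, surjective, 1-Lipschitz `φ0 : [0,S] → [0,h]` is the
uniform limit of strictly increasing 1-Lipschitz functions `φ0ᵢ` whose (absolutely
continuous, strictly increasing, surjective) inverses `σᵢ` converge pointwise to the
right inverse `σ` of `φ0` at every continuity point of `σ`. -/
theorem stmt_14 (h S : ℝ) (hh : 0 < h) (hS : 0 < S)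
    (φ0 : ℝ → ℝ)
    (hmono : MonotoneOn φ0 (Set.Icc 0 S))
    (hlip : LipschitzOnWith 1 φ0 (Set.Icc 0 S))
    (hsurj : Set.SurjOn φ0 (Set.Icc 0 S) (Set.Icc 0 h))
    (hφ00 : φ0 0 = 0) (hφ0S : φ0 S = h)
    (σ : ℝ → ℝ) (hσ0 : σ 0 = 0) (hσh : σ h = S)
    (hσ : ∀ r ∈ Set.Ioo 0 h, σ r = sInf {s | s ∈ Set.Icc 0 S ∧ r < φ0 s}) :
    ∃ σi φ0i : ℕ → ℝ → ℝ, ∃ gi : ℕ → ℝ → ℝ,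
      (∀ i, StrictMonoOn (σi i) (Set.Icc 0 h)) ∧
      (∀ i, σi i 0 = 0 ∧ σi i h = S) ∧
      (∀ i, IntegrableOn (gi i) (Set.Icc 0 h)) ∧
      (∀ i, ∀ r ∈ Set.Icc 0 h, σi i r = ∫ t in (0:ℝ)..r, gi i t) ∧
      (∀ i, Set.SurjOn (σi i) (Set.Icc 0 h) (Set.Icc 0 S)) ∧
      (∀ i, StrictMonoOn (φ0i i) (Set.Icc 0 S)) ∧
      (∀ i, LipschitzOnWith 1 (φ0i i) (Set.Icc 0 S)) ∧
      (∀ i, ∀ r ∈ Set.Icc 0 h, φ0i i (σi i r) = r) ∧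
      (∀ i, ∀ s ∈ Set.Icc 0 S, σi i (φ0i i s) = s) ∧
      TendstoUniformlyOn (fun i => φ0i i) φ0 Filter.atTop (Set.Icc 0 S) ∧
      (∀ r ∈ Set.Icc 0 h, ContinuousWithinAt σ (Set.Icc 0 h) r →
        Filter.Tendsto (fun i => σi i r) Filter.atTop (nhds (σ r))) := by
  -- basic facts about φ0
  have hdist : ∀ x ∈ Set.Icc (0:ℝ) S, ∀ y ∈ Set.Icc (0:ℝ) S, |φ0 x - φ0 y| ≤ |x - y| := by
    intro x hx y hy
    have := hlip.dist_le_mul x hx y hy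
    simpa [Real.dist_eq] using this
  have hhS : h ≤ S := by
    have := hdist S ⟨hS.le, le_refl S⟩ 0 ⟨le_refl 0, hS.le⟩
    rw [hφ0S, hφ00, sub_zero, sub_zero, abs_of_pos hh, abs_of_pos hS] at this
    exact this
  have hc : 0 < h / S := div_pos hh hS
  have hc1 : h / S ≤ 1 := by rw [div_le_one hS]; exact hhS
  have hcS : h / S * S = h := div_mul_cancel₀ h (ne_of_gt hS)
  have hφmem : ∀ s ∈ Set.Icc (0:ℝ) S, 0 ≤ φ0 s ∧ φ0 s ≤ h := by
    intro s hs
    constructor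
    · have := hmono ⟨le_refl 0, hS.le⟩ hs hs.1
      rwa [hφ00] at this
    · have := hmono hs ⟨hS.le, le_refl S⟩ hs.2
      rwa [hφ0S] at this
  -- the clipping identity
  have hid : ∀ x : ℝ, max 0 (min x S) + min x 0 + max (x - S) 0 = x := by
    intro x
    rcases le_total x 0 with h1 | h1
    · rw [min_eq_left (h1.trans hS.le), max_eq_left h1, min_eq_left h1,
        max_eq_right (by linarith : x - S ≤ 0)]
      ring
    · rcases le_total x S with h2 | h2
      · rw [min_eq_left h2, max_eq_right h1, min_eq_right h1,
          max_eq_right (by linarith : x - S ≤ 0)]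
        ring
      · rw [min_eq_right h2, max_eq_right hS.le, min_eq_right (hS.le.trans h2),
          max_eq_left (by linarith : (0:ℝ) ≤ x - S)]
        ring
  have hclipmem : ∀ x : ℝ, max 0 (min x S) ∈ Set.Icc (0:ℝ) S :=
    fun x => ⟨le_max_left _ _, max_le hS.le (min_le_right _ _)⟩
  -- the fundamental sandwich inequality for Ψ
  have hsand : ∀ e : ℝ, 0 < e → e ≤ 1/2 → ∀ s t : ℝ, s ≤ t →
      e * (h/S) * (t - s) ≤ stmt14Psi h S φ0 e t - stmt14Psi h S φ0 e s ∧
      stmt14Psi h S φ0 e t - stmt14Psi h S φ0 e s ≤ t - s := by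
    intro e he he2 s t hst
    have hE1 : e * (h/S) ≤ 1 := by nlinarith
    have hEe : e * (h/S) ≤ e := by nlinarith
    have h1 : max 0 (min s S) ≤ max 0 (min t S) :=
      max_le_max le_rfl (min_le_min hst le_rfl)
    have h3 : min s 0 ≤ min t 0 := min_le_min hst le_rfl
    have h5 : max (s - S) 0 ≤ max (t - S) 0 := max_le_max (by linarith) le_rfl
    have hsplit : t - s = (max 0 (min t S) - max 0 (min s S)) + (min t 0 - min s 0)
        + (max (t - S) 0 - max (s - S) 0) := by
      have := hid s; have := hid t; linarith
    have hφm : φ0 (max 0 (min s S)) ≤ φ0 (max 0 (min t S)) :=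
      hmono (hclipmem s) (hclipmem t) h1
    have hφl : φ0 (max 0 (min t S)) - φ0 (max 0 (min s S))
        ≤ max 0 (min t S) - max 0 (min s S) := by
      have := hdist _ (hclipmem t) _ (hclipmem s)
      rw [abs_of_nonneg (by linarith), abs_of_nonneg (by linarith)] at this
      exact this
    constructor
    · have f1 : 0 ≤ (1 - e) * (φ0 (max 0 (min t S)) - φ0 (max 0 (min s S))) :=
        mul_nonneg (by linarith) (by linarith)
      have f2 : 0 ≤ (1 - e * (h/S)) * (min t 0 - min s 0) :=
        mul_nonneg (by linarith) (by linarith)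
      have f3 : 0 ≤ (1 - e * (h/S)) * (max (t - S) 0 - max (s - S) 0) :=
        mul_nonneg (by linarith) (by linarith)
      have f4 : e * (h/S) * (t - s) = e * (h/S) * (max 0 (min t S) - max 0 (min s S))
          + e * (h/S) * (min t 0 - min s 0)
          + e * (h/S) * (max (t - S) 0 - max (s - S) 0) := by
        rw [hsplit]; ring
      simp only [stmt14Psi]
      nlinarith [f1, f2, f3, f4]
    · have f5 : (1 - e) * (φ0 (max 0 (min t S)) - φ0 (max 0 (min s S)))
          ≤ (1 - e) * (max 0 (min t S) - max 0 (min s S)) :=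
        mul_le_mul_of_nonneg_left hφl (by linarith)
      have f6 : e * (h/S) * (max 0 (min t S) - max 0 (min s S))
          ≤ e * (max 0 (min t S) - max 0 (min s S)) :=
        mul_le_mul_of_nonneg_right hEe (by linarith)
      simp only [stmt14Psi]
      nlinarith [f5, f6, hsplit, h3, h5]
  -- value of Ψ on [0, S]
  have hψs : ∀ e : ℝ, ∀ s ∈ Set.Icc (0:ℝ) S,
      stmt14Psi h S φ0 e s = (1 - e) * φ0 s + e * (h/S) * s := by
    intro e s hs
    simp only [stmt14Psi]
    rw [min_eq_left hs.2, max_eq_right hs.1, min_eq_right hs.1,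
      max_eq_right (by linarith [hs.2] : s - S ≤ 0)]
    ring
  have hψ0 : ∀ e : ℝ, stmt14Psi h S φ0 e 0 = 0 := by
    intro e
    rw [hψs e 0 ⟨le_refl 0, hS.le⟩, hφ00]; ring
  have hψS : ∀ e : ℝ, stmt14Psi h S φ0 e S = h := by
    intro e
    rw [hψs e S ⟨hS.le, le_refl S⟩, hφ0S, mul_assoc, hcS]; ring
  -- strict monotonicity and Lipschitz continuity of Ψ
  have hψmono : ∀ e : ℝ, 0 < e → e ≤ 1/2 → StrictMono (stmt14Psi h S φ0 e) := by
    intro e he he2 a b hab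
    have := (hsand e he he2 a b hab.le).1
    nlinarith [mul_pos (mul_pos he hc) (by linarith : (0:ℝ) < b - a)]
  have hψlip : ∀ e : ℝ, 0 < e → e ≤ 1/2 → LipschitzWith 1 (stmt14Psi h S φ0 e) := by
    intro e he he2
    apply LipschitzWith.of_dist_le_mul
    intro a b
    rw [NNReal.coe_one, one_mul, Real.dist_eq, Real.dist_eq]
    rcases le_total a b with hab | hab
    · obtain ⟨l, u⟩ := hsand e he he2 a b hab
      have h0 : 0 ≤ stmt14Psi h S φ0 e b - stmt14Psi h S φ0 e a :=
        le_trans (mul_nonneg (mul_nonneg he.le hc.le) (by linarith)) l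
      rw [abs_of_nonpos (by linarith), abs_of_nonpos (by linarith)]
      linarith
    · obtain ⟨l, u⟩ := hsand e he he2 b a hab
      have h0 : 0 ≤ stmt14Psi h S φ0 e a - stmt14Psi h S φ0 e b :=
        le_trans (mul_nonneg (mul_nonneg he.le hc.le) (by linarith)) l
      rw [abs_of_nonneg (by linarith), abs_of_nonneg (by linarith)]
      linarith
  -- surjectivity of Ψ
  have hψsurj : ∀ e : ℝ, 0 < e → e ≤ 1/2 → Function.Surjective (stmt14Psi h S φ0 e) := by
    intro e he he2 y
    have hE : 0 < e * (h/S) := mul_pos he hc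
    rcases le_total 0 y with hy | hy
    · have hb : 0 ≤ y / (e * (h/S)) := div_nonneg hy hE.le
      have hψb : y ≤ stmt14Psi h S φ0 e (y / (e * (h/S))) := by
        have := (hsand e he he2 0 (y / (e * (h/S))) hb).1
        rw [hψ0 e, sub_zero, sub_zero, mul_div_cancel₀ y (ne_of_gt hE)] at this
        exact this
      have hcont : ContinuousOn (stmt14Psi h S φ0 e) (Set.Icc 0 (y / (e * (h/S)))) :=
        (hψlip e he he2).continuous.continuousOn
      have := intermediate_value_Icc hb hcont
      have hmem : y ∈ Set.Icc (stmt14Psi h S φ0 e 0) (stmt14Psi h S φ0 e (y / (e * (h/S)))) := by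
        rw [hψ0 e]; exact ⟨hy, hψb⟩
      obtain ⟨x, _, hx⟩ := this hmem
      exact ⟨x, hx⟩
    · have hb : y / (e * (h/S)) ≤ 0 := div_nonpos_of_nonpos_of_nonneg hy hE.le
      have hψb : stmt14Psi h S φ0 e (y / (e * (h/S))) ≤ y := by
        have := (hsand e he he2 (y / (e * (h/S))) 0 hb).1
        rw [hψ0 e, zero_sub, zero_sub, mul_neg, mul_div_cancel₀ y (ne_of_gt hE)] at this
        linarith
      have hcont : ContinuousOn (stmt14Psi h S φ0 e) (Set.Icc (y / (e * (h/S))) 0) :=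
        (hψlip e he he2).continuous.continuousOn
      have := intermediate_value_Icc hb hcont
      have hmem : y ∈ Set.Icc (stmt14Psi h S φ0 e (y / (e * (h/S)))) (stmt14Psi h S φ0 e 0) := by
        rw [hψ0 e]; exact ⟨hψb, hy⟩
      obtain ⟨x, _, hx⟩ := this hmem
      exact ⟨x, hx⟩
  -- the inverse σ'
  have hriσ : ∀ e : ℝ, 0 < e → e ≤ 1/2 → ∀ r : ℝ,
      stmt14Psi h S φ0 e (stmt14Sigma h S φ0 e r) = r := by
    intro e he he2 r
    exact Function.invFun_eq (hψsurj e he he2 r)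
  have hliσ : ∀ e : ℝ, 0 < e → e ≤ 1/2 → ∀ s : ℝ,
      stmt14Sigma h S φ0 e (stmt14Psi h S φ0 e s) = s := by
    intro e he he2 s
    exact Function.leftInverse_invFun (hψmono e he he2).injective s
  have hσ'0 : ∀ e : ℝ, 0 < e → e ≤ 1/2 → stmt14Sigma h S φ0 e 0 = 0 := by
    intro e he he2
    have := hliσ e he he2 0
    rwa [hψ0 e] at this
  have hσ'h : ∀ e : ℝ, 0 < e → e ≤ 1/2 → stmt14Sigma h S φ0 e h = S := by
    intro e he he2
    have := hliσ e he he2 S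
    rwa [hψS e] at this
  have hσ'mono : ∀ e : ℝ, 0 < e → e ≤ 1/2 → StrictMono (stmt14Sigma h S φ0 e) := by
    intro e he he2 a b hab
    have h2 : stmt14Psi h S φ0 e (stmt14Sigma h S φ0 e a)
        < stmt14Psi h S φ0 e (stmt14Sigma h S φ0 e b) := by
      rw [hriσ e he he2, hriσ e he he2]; exact hab
    exact (hψmono e he he2).lt_iff_lt.mp h2
  have hσ'mem : ∀ e : ℝ, 0 < e → e ≤ 1/2 → ∀ r ∈ Set.Icc (0:ℝ) h,
      stmt14Sigma h S φ0 e r ∈ Set.Icc (0:ℝ) S := by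
    intro e he he2 r hr
    constructor
    · have := (hσ'mono e he he2).monotone hr.1
      rwa [hσ'0 e he he2] at this
    · have := (hσ'mono e he he2).monotone hr.2
      rwa [hσ'h e he he2] at this
  -- σ' is Lipschitz
  have hσ'lipd : ∀ e : ℝ, 0 < e → e ≤ 1/2 → ∀ a b : ℝ, a ≤ b →
      stmt14Sigma h S φ0 e b - stmt14Sigma h S φ0 e a ≤ (b - a) / (e * (h/S)) := by
    intro e he he2 a b hab
    have hE : 0 < e * (h/S) := mul_pos he hc
    have hm : stmt14Sigma h S φ0 e a ≤ stmt14Sigma h S φ0 e b :=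
      (hσ'mono e he he2).monotone hab
    have l := (hsand e he he2 _ _ hm).1
    rw [hriσ e he he2, hriσ e he he2] at l
    rw [le_div_iff₀ hE]
    nlinarith [l]
  have hσ'lip : ∀ e : ℝ, 0 < e → e ≤ 1/2 →
      LipschitzWith (Real.toNNReal (1 / (e * (h/S)))) (stmt14Sigma h S φ0 e) := by
    intro e he he2
    have hE : 0 < e * (h/S) := mul_pos he hc
    apply LipschitzWith.of_dist_le_mul
    intro a b
    rw [Real.coe_toNNReal _ (by positivity), Real.dist_eq, Real.dist_eq]
    rcases le_total a b with hab | hab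
    · have h1 := hσ'lipd e he he2 a b hab
      have h2 : stmt14Sigma h S φ0 e a ≤ stmt14Sigma h S φ0 e b :=
        (hσ'mono e he he2).monotone hab
      rw [abs_of_nonpos (by linarith), abs_of_nonpos (by linarith)]
      have h3 : stmt14Sigma h S φ0 e b - stmt14Sigma h S φ0 e a
          ≤ (b - a) * (e * (h/S))⁻¹ := by rw [← div_eq_mul_inv]; exact h1
      rw [one_div]
      nlinarith [h3]
    · have h1 := hσ'lipd e he he2 b a hab
      have h2 : stmt14Sigma h S φ0 e b ≤ stmt14Sigma h S φ0 e a :=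
        (hσ'mono e he he2).monotone hab
      rw [abs_of_nonneg (by linarith), abs_of_nonneg (by linarith)]
      have h3 : stmt14Sigma h S φ0 e a - stmt14Sigma h S φ0 e b
          ≤ (a - b) * (e * (h/S))⁻¹ := by rw [← div_eq_mul_inv]; exact h1
      rw [one_div]
      nlinarith [h3]
  -- measure-theoretic facts
  have hψmeas : ∀ e : ℝ, 0 < e → e ≤ 1/2 → Measurable (stmt14Psi h S φ0 e) :=
    fun e he he2 => (hψlip e he he2).continuous.measurable
  have himg : ∀ e : ℝ, 0 < e → e ≤ 1/2 → ∀ A : Set ℝ,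
      stmt14Psi h S φ0 e ⁻¹' A = stmt14Sigma h S φ0 e '' A := by
    intro e he he2 A
    ext x
    constructor
    · intro hx
      exact ⟨stmt14Psi h S φ0 e x, hx, hliσ e he he2 x⟩
    · rintro ⟨a, ha, rfl⟩
      show stmt14Psi h S φ0 e (stmt14Sigma h S φ0 e a) ∈ A
      rw [hriσ e he he2]
      exact ha
  have hvolimg : ∀ e : ℝ, 0 < e → e ≤ 1/2 → ∀ A : Set ℝ,
      volume (stmt14Sigma h S φ0 e '' A)
        ≤ (Real.toNNReal (1 / (e * (h/S))) : ℝ≥0∞) * volume A := by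
    intro e he he2 A
    have h2 := (hσ'lip e he he2).hausdorffMeasure_image_le (zero_le_one (α := ℝ)) A
    rw [hausdorffMeasure_real] at h2
    simpa [ENNReal.rpow_one] using h2
  have hAC : ∀ e : ℝ, 0 < e → e ≤ 1/2 →
      Measure.map (stmt14Psi h S φ0 e) volume ≪ volume := by
    intro e he he2
    refine Measure.AbsolutelyContinuous.mk fun A hA hA0 => ?_
    rw [Measure.map_apply (hψmeas e he he2) hA, himg e he he2]
    have := hvolimg e he he2 A
    rw [hA0, mul_zero] at this
    exact le_antisymm this zero_le
  have hμAC : ∀ e : ℝ, 0 < e → e ≤ 1/2 → stmt14Mu h S φ0 e ≪ volume := by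
    intro e he he2
    exact (Measure.absolutelyContinuous_of_le Measure.restrict_le_self).trans (hAC e he he2)
  have hμfin : ∀ e : ℝ, 0 < e → e ≤ 1/2 → IsFiniteMeasure (stmt14Mu h S φ0 e) := by
    intro e he he2
    constructor
    rw [stmt14Mu, Measure.restrict_apply_univ,
      Measure.map_apply (hψmeas e he he2) measurableSet_Icc, himg e he he2]
    calc volume (stmt14Sigma h S φ0 e '' Set.Icc (-1) (h+1))
        ≤ (Real.toNNReal (1 / (e * (h/S))) : ℝ≥0∞) * volume (Set.Icc (-1) (h+1)) :=
          hvolimg e he he2 _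
      _ < ⊤ := by
          rw [Real.volume_Icc]
          exact ENNReal.mul_lt_top ENNReal.coe_lt_top ENNReal.ofReal_lt_top
  have hμIoc : ∀ e : ℝ, 0 < e → e ≤ 1/2 → ∀ r ∈ Set.Icc (0:ℝ) h,
      stmt14Mu h S φ0 e (Set.Ioc 0 r) = ENNReal.ofReal (stmt14Sigma h S φ0 e r) := by
    intro e he he2 r hr
    have hsub : Set.Ioc 0 r ∩ Set.Icc (-1) (h+1) = Set.Ioc 0 r := by
      apply Set.inter_eq_self_of_subset_left
      intro x hx
      rw [Set.mem_Ioc] at hx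
      exact ⟨by linarith [hx.1], by linarith [hx.2, hr.2]⟩
    rw [stmt14Mu, Measure.restrict_apply measurableSet_Ioc, hsub,
      Measure.map_apply (hψmeas e he he2) measurableSet_Ioc]
    have hpre : stmt14Psi h S φ0 e ⁻¹' Set.Ioc 0 r = Set.Ioc 0 (stmt14Sigma h S φ0 e r) := by
      ext x
      simp only [Set.mem_preimage, Set.mem_Ioc]
      constructor
      · rintro ⟨h1, h2⟩
        constructor
        · exact (hψmono e he he2).lt_iff_lt.mp (by rw [hψ0 e]; exact h1)
        · exact (hψmono e he he2).le_iff_le.mp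
            (by rw [hriσ e he he2]; exact h2)
      · rintro ⟨h1, h2⟩
        constructor
        · have := (hψmono e he he2) h1
          rwa [hψ0 e] at this
        · have := (hψmono e he he2).monotone h2
          rwa [hriσ e he he2] at this
    rw [hpre, Real.volume_Ioc, sub_zero]
  -- helper facts about 1/(i+2)
  have heipos : ∀ i : ℕ, (0:ℝ) < 1/((i:ℝ)+2) := fun i => by positivity
  have heile : ∀ i : ℕ, 1/((i:ℝ)+2) ≤ 1/2 := fun i => by
    apply one_div_le_one_div_of_le two_pos
    have := Nat.cast_nonneg (α := ℝ) i
    linarith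
  refine ⟨fun i => stmt14Sigma h S φ0 (1/((i:ℝ)+2)),
    fun i => stmt14Psi h S φ0 (1/((i:ℝ)+2)),
    fun i => stmt14g h S φ0 (1/((i:ℝ)+2)), ?_, ?_, ?_, ?_, ?_, ?_, ?_, ?_, ?_, ?_, ?_⟩
  · -- strict monotonicity of σi
    exact fun i => (hσ'mono _ (heipos i) (heile i)).strictMonoOn _
  · -- endpoints of σi
    exact fun i => ⟨hσ'0 _ (heipos i) (heile i), hσ'h _ (heipos i) (heile i)⟩
  · -- integrability of gi
    intro i
    haveI := hμfin _ (heipos i) (heile i)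
    exact (Measure.integrable_toReal_rnDeriv
      (μ := stmt14Mu h S φ0 (1/((i:ℝ)+2))) (ν := volume)).integrableOn
  · -- integral representation of σi
    intro i r hr
    haveI := hμfin _ (heipos i) (heile i)
    rw [intervalIntegral.integral_of_le hr.1]
    rw [show (fun t => stmt14g h S φ0 (1/((i:ℝ)+2)) t)
      = fun t => (((stmt14Mu h S φ0 (1/((i:ℝ)+2))).rnDeriv volume) t).toReal from rfl]
    rw [MeasureTheory.integral_toReal
      ((Measure.measurable_rnDeriv _ _).aemeasurable)
      (ae_restrict_of_ae (Measure.rnDeriv_lt_top _ _))]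
    rw [Measure.setLIntegral_rnDeriv (hμAC _ (heipos i) (heile i))]
    rw [hμIoc _ (heipos i) (heile i) r hr]
    rw [ENNReal.toReal_ofReal (hσ'mem _ (heipos i) (heile i) r hr).1]
  · -- surjectivity of σi
    intro i s hs
    refine ⟨stmt14Psi h S φ0 (1/((i:ℝ)+2)) s, ?_, hliσ _ (heipos i) (heile i) s⟩
    constructor
    · have := (hψmono _ (heipos i) (heile i)).monotone hs.1
      rwa [hψ0] at this
    · have := (hψmono _ (heipos i) (heile i)).monotone hs.2
      rwa [hψS] at this
  · -- strict monotonicity of φ0i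
    exact fun i => (hψmono _ (heipos i) (heile i)).strictMonoOn _
  · -- Lipschitz continuity of φ0i
    exact fun i => ((hψlip _ (heipos i) (heile i)).lipschitzOnWith (s := Set.Icc 0 S))
  · -- right inverse
    exact fun i r _ => hriσ _ (heipos i) (heile i) r
  · -- left inverse
    exact fun i s _ => hliσ _ (heipos i) (heile i) s
  · -- uniform convergence
    rw [Metric.tendstoUniformlyOn_iff]
    intro η hη
    rw [Filter.eventually_atTop]
    refine ⟨⌈h/η⌉₊, fun i hi x hx => ?_⟩
    have hcx : 0 ≤ h/S * x := mul_nonneg hc.le hx.1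
    have hcx2 : h/S * x ≤ h := by
      calc h/S * x ≤ h/S * S := mul_le_mul_of_nonneg_left hx.2 hc.le
        _ = h := hcS
    have hφx := hφmem x hx
    show dist (φ0 x) (stmt14Psi h S φ0 (1/((i:ℝ)+2)) x) < η
    rw [Real.dist_eq, hψs _ x hx]
    have habs : |φ0 x - ((1 - 1/((i:ℝ)+2)) * φ0 x + 1/((i:ℝ)+2) * (h/S) * x)|
        = 1/((i:ℝ)+2) * |φ0 x - h/S * x| := by
      rw [show φ0 x - ((1 - 1/((i:ℝ)+2)) * φ0 x + 1/((i:ℝ)+2) * (h/S) * x)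
        = 1/((i:ℝ)+2) * (φ0 x - h/S * x) by ring]
      rw [abs_mul, abs_of_pos (heipos i)]
    rw [habs]
    have h2 : |φ0 x - h/S * x| ≤ h := abs_le.mpr ⟨by linarith [hφx.1], by linarith [hφx.2]⟩
    have h3 : (h/η : ℝ) ≤ (⌈h/η⌉₊ : ℝ) := Nat.le_ceil _
    have h4 : ((⌈h/η⌉₊ : ℕ) : ℝ) ≤ (i : ℝ) := Nat.cast_le.mpr hi
    have h5 : h/η < (i:ℝ) + 2 := by linarith
    have h6 : h < η * ((i:ℝ)+2) := by
      rw [div_lt_iff₀ hη] at h5; linarith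
    calc 1/((i:ℝ)+2) * |φ0 x - h/S * x| ≤ 1/((i:ℝ)+2) * h :=
          mul_le_mul_of_nonneg_left h2 (heipos i).le
      _ < η := by
          rw [div_mul_eq_mul_div, one_mul, div_lt_iff₀ (by positivity)]
          linarith
  · -- pointwise convergence of σi at continuity points of σ
    intro r hr hcont
    rcases eq_or_lt_of_le hr.1 with h0 | h0
    · -- r = 0
      have : (fun i : ℕ => stmt14Sigma h S φ0 (1/((i:ℝ)+2)) r) = fun _ => (0:ℝ) := by
        funext i
        rw [← h0]
        exact hσ'0 _ (heipos i) (heile i)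
      rw [this, ← h0, hσ0]
      exact tendsto_const_nhds
    rcases eq_or_lt_of_le hr.2 with hr2 | hr2
    · -- r = h
      have : (fun i : ℕ => stmt14Sigma h S φ0 (1/((i:ℝ)+2)) r) = fun _ => S := by
        funext i
        rw [hr2]
        exact hσ'h _ (heipos i) (heile i)
      rw [this, hr2, hσh]
      exact tendsto_const_nhds
    -- 0 < r < h
    rw [Metric.tendsto_atTop]
    intro η hη
    rw [Metric.continuousWithinAt_iff] at hcont
    obtain ⟨δ, hδ, hδ'⟩ := hcont η hη
    have hm : 0 < min (min (δ/S) (δ/(h+1))) (min (r/S) ((h-r)/(h+1))) := by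
      apply lt_min
      · exact lt_min (div_pos hδ hS) (div_pos hδ (by linarith))
      · exact lt_min (div_pos h0 hS) (div_pos (by linarith) (by linarith))
    set m := min (min (δ/S) (δ/(h+1))) (min (r/S) ((h-r)/(h+1))) with hmdef
    refine ⟨⌈1/m⌉₊, fun i hi => ?_⟩
    set e := 1/((i:ℝ)+2) with hedef
    have he : 0 < e := heipos i
    have he2 : e ≤ 1/2 := heile i
    have hem : e < m := by
      have h1 : (1/m : ℝ) ≤ (⌈1/m⌉₊ : ℝ) := Nat.le_ceil _
      have h2 : ((⌈1/m⌉₊ : ℕ) : ℝ) ≤ (i : ℝ) := Nat.cast_le.mpr hi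
      have h3 : 1/m < (i:ℝ) + 2 := by linarith
      rw [hedef, div_lt_iff₀ (by positivity)]
      rw [div_lt_iff₀ hm] at h3
      linarith
    have hb1 : e * S < δ := by
      have : e < δ/S := lt_of_lt_of_le hem ((min_le_left _ _).trans (min_le_left _ _))
      rw [lt_div_iff₀ hS] at this
      linarith
    have hb2 : e * (h+1) < δ := by
      have : e < δ/(h+1) := lt_of_lt_of_le hem ((min_le_left _ _).trans (min_le_right _ _))
      rw [lt_div_iff₀ (by linarith)] at this
      linarith
    have hb3 : e * S < r := by
      have : e < r/S := lt_of_lt_of_le hem ((min_le_right _ _).trans (min_le_left _ _))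
      rw [lt_div_iff₀ hS] at this
      linarith
    have hb4 : e * (h+1) < h - r := by
      have : e < (h-r)/(h+1) := lt_of_lt_of_le hem ((min_le_right _ _).trans (min_le_right _ _))
      rw [lt_div_iff₀ (by linarith)] at this
      linarith
    have hu2 : stmt14Sigma h S φ0 e r ∈ Set.Icc (0:ℝ) S :=
      hσ'mem e he he2 r ⟨hr.1, hr.2⟩
    have huf : (1 - e) * φ0 (stmt14Sigma h S φ0 e r) + e * (h/S) * stmt14Sigma h S φ0 e r
        = r := by
      rw [← hψs e _ hu2]
      exact hriσ e he he2 r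
    have hφu := hφmem _ hu2
    have hcu : h/S * stmt14Sigma h S φ0 e r ≤ h := by
      calc h/S * stmt14Sigma h S φ0 e r ≤ h/S * S :=
          mul_le_mul_of_nonneg_left hu2.2 hc.le
        _ = h := hcS
    have hcu0 : 0 ≤ h/S * stmt14Sigma h S φ0 e r := mul_nonneg hc.le hu2.1
    have hupper : φ0 (stmt14Sigma h S φ0 e r) ≤ r + e * h := by
      have p1 : 0 ≤ e * (h/S * stmt14Sigma h S φ0 e r) := mul_nonneg he.le hcu0
      have p2 : e * φ0 (stmt14Sigma h S φ0 e r) ≤ e * h :=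
        mul_le_mul_of_nonneg_left hφu.2 he.le
      nlinarith [huf]
    have hq : 0 < φ0 (stmt14Sigma h S φ0 e r) + S - h/S * stmt14Sigma h S φ0 e r := by
      rcases lt_or_eq_of_le hu2.2 with hus | hus
      · have : h/S * stmt14Sigma h S φ0 e r < h/S * S := mul_lt_mul_of_pos_left hus hc
        rw [hcS] at this
        linarith [hφu.1, hhS]
      · rw [hus, hφ0S, hcS]
        linarith
    have hlowers : r - e * S < φ0 (stmt14Sigma h S φ0 e r) := by
      have q := mul_pos he hq
      nlinarith [huf]
    have hr1 : r - e * S ∈ Set.Ioo (0:ℝ) h := ⟨by linarith, by nlinarith [mul_pos he hS]⟩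
    have hr2' : r + e * (h+1) ∈ Set.Ioo (0:ℝ) h :=
      ⟨by nlinarith [mul_pos he (show (0:ℝ) < h + 1 by linarith)], by linarith⟩
    have hs1 : σ (r - e * S) ≤ stmt14Sigma h S φ0 e r := by
      rw [hσ _ hr1]
      apply csInf_le
      · exact ⟨0, fun x hx => hx.1.1⟩
      · exact ⟨hu2, hlowers⟩
    have hs2 : stmt14Sigma h S φ0 e r ≤ σ (r + e * (h+1)) := by
      rw [hσ _ hr2']
      apply le_csInf
      · exact ⟨S, ⟨hS.le, le_refl S⟩, by rw [hφ0S]; exact hr2'.2⟩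
      · rintro b ⟨hbmem, hbgt⟩
        by_contra hbu
        push_neg at hbu
        have hle : φ0 b ≤ φ0 (stmt14Sigma h S φ0 e r) := hmono hbmem hu2 hbu.le
        have heh : e * h < e * (h+1) := by nlinarith
        linarith [hupper, hbgt]
    have hd1 : dist (σ (r - e * S)) (σ r) < η := by
      apply hδ' ⟨by linarith, by linarith [hr1.2]⟩
      rw [Real.dist_eq, show r - e * S - r = -(e * S) by ring, abs_neg,
        abs_of_nonneg (by positivity)]
      exact hb1
    have hd2 : dist (σ (r + e * (h+1))) (σ r) < η := by
      apply hδ' ⟨by positivity, by linarith [hr2'.2]⟩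
      rw [Real.dist_eq, show r + e * (h+1) - r = e * (h+1) by ring,
        abs_of_nonneg (by positivity)]
      exact hb2
    rw [Real.dist_eq, abs_lt]
    rw [Real.dist_eq, abs_lt] at hd1 hd2
    constructor
    · linarith [hd1.1, hd1.2, hs1]
    · linarith [hd2.1, hd2.2, hs2]
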